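/- Let F be a field of characteristic 2. Then the associative algebra M_2(F) of 2×2 matrices over F is Lie solvable: the Lie derived series δ^[0](A) = A, δ^[n+1](A) = [δ^[n](A), δ^[n](A)] (linear span of brackets) eventually vanishes. -/
import Mathlib


/-- The Lie derived series of an associative algebra `A` over a field `F`:
`δ⁰(A) = A`, `δⁿ⁺¹(A)` is the linear span of all `xy - yx` with `x, y ∈ δⁿ(A)`. -/
def lieDerivedSeries (F A : Type*) [Field F] [Ring A] [Algebra F A] : ℕ → Submodule F A
  | 0 => ⊤
  | n + 1 => Submodule.span F
      {z : A | ∃ x ∈ lieDerivedSeries F A n, ∃ y ∈ lieDerivedSeries F A n, z = x * y - y * x}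

/-- Over a field of characteristic 2, the algebra `M₂(F)` is Lie solvable:
its Lie derived series eventually vanishes. -/
theorem m2_lie_solvable (F : Type*) [Field F] [CharP F 2] :
    ∃ n : ℕ, lieDerivedSeries F (Matrix (Fin 2) (Fin 2) F) n = ⊥ := by
  have two : (2 : F) = 0 := by exact_mod_cast CharP.cast_eq_zero F 2
  have h1 : ∀ x ∈ lieDerivedSeries F (Matrix (Fin 2) (Fin 2) F) 1, x 1 1 = - x 0 0 := by
    have key : lieDerivedSeries F (Matrix (Fin 2) (Fin 2) F) 1 ≤
        LinearMap.ker (Matrix.traceLinearMap (Fin 2) F F) := by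
      rw [lieDerivedSeries, Submodule.span_le]
      rintro z ⟨x, -, y, -, rfl⟩
      simp only [SetLike.mem_coe, LinearMap.mem_ker, Matrix.traceLinearMap_apply, map_sub,
        Matrix.trace_sub, Matrix.trace_mul_comm x y, sub_self]
    intro x hx
    have := key hx
    rw [LinearMap.mem_ker, Matrix.traceLinearMap_apply, Matrix.trace_fin_two] at this
    linear_combination this
  have h2 : lieDerivedSeries F (Matrix (Fin 2) (Fin 2) F) 2 ≤
      Submodule.span F {(1 : Matrix (Fin 2) (Fin 2) F)} := by
    rw [lieDerivedSeries, Submodule.span_le]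
    rintro z ⟨x, hx, y, hy, rfl⟩
    have hx' := h1 x hx
    have hy' := h1 y hy
    have hxy : x * y - y * x = (x 0 1 * y 1 0 - x 1 0 * y 0 1) • (1 : Matrix (Fin 2) (Fin 2) F) := by
      ext i j
      simp only [Matrix.sub_apply, Matrix.mul_apply, Matrix.smul_apply, Matrix.one_apply,
        Fin.sum_univ_two]
      fin_cases i <;> fin_cases j <;>
        simp only [Fin.isValue, if_true, if_false, Fin.zero_eta, Fin.mk_one, one_ne_zero,
          zero_ne_one, ite_true, ite_false, smul_eq_mul, mul_one, mul_zero] <;>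
        set a := x 0 0 with ha <;> set b := x 0 1 with hb <;> set c := x 1 0 with hc <;>
        set a' := y 0 0 with ha' <;> set b' := y 0 1 with hb' <;> set c' := y 1 0 with hc'
      all_goals try simp only [hx', hy']
      · ring
      · linear_combination (a * b' - b * a') * two
      · linear_combination (c * a' - a * c') * two
      · linear_combination (c * b' - b * c') * two
    rw [hxy]
    exact SetLike.mem_coe.mpr
      (Submodule.smul_mem _ _ (Submodule.mem_span_singleton_self _))
  refine ⟨3, le_bot_iff.mp ?_⟩
  rw [show (3 : ℕ) = 2 + 1 from rfl, lieDerivedSeries, Submodule.span_le]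
  rintro z ⟨x, hx, y, hy, rfl⟩
  obtain ⟨a, rfl⟩ := Submodule.mem_span_singleton.mp (h2 hx)
  obtain ⟨b, rfl⟩ := Submodule.mem_span_singleton.mp (h2 hy)
  simp [smul_smul, mul_comm]
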